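/- Let X be a compact metric space that is semi-locally connected (i.e., semi-locally connected at every point) and let f : X → X be a homeomorphism. Then f is equicontinuous if and only if f satisfies property (CW), i.e., for every x ∈ X and every subcontinuum C of X with x ∉ C one has inf_{n ∈ ℤ} dist(f^n(x), f^n(C)) > 0. -/

import Mathlib

open Metric Filter Topology Set

variable {X : Type*}

/-- The `n`-th iterate (for `n : ℤ`) of a homeomorphism `f : X ≃ₜ X`. -/
def hIter [TopologicalSpace X] (f : X ≃ₜ X) (n : ℤ) : X → X :=
  ⇑(f.toEquiv ^ n)

/-- `f` is equicontinuous: for every `ε > 0` there is `δ > 0` such that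
`d(fⁿ x, fⁿ y) ≤ ε` for all `n : ℤ` whenever `d(x, y) ≤ δ`. -/
def EquicontHomeo [MetricSpace X] (f : X ≃ₜ X) : Prop :=
  ∀ ε > (0 : ℝ), ∃ δ > (0 : ℝ), ∀ x y : X, dist x y ≤ δ →
    ∀ n : ℤ, dist (hIter f n x) (hIter f n y) ≤ ε

/-- Property (CW): `inf_{n ∈ ℤ} dist(fⁿ x, fⁿ C) > 0` for every `x ∈ X` and every
subcontinuum `C` (nonempty compact connected subset) with `x ∉ C`. -/
def PropCW [MetricSpace X] (f : X ≃ₜ X) : Prop :=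
  ∀ (x : X) (C : Set X), C.Nonempty → IsCompact C → IsConnected C → x ∉ C →
    0 < ⨅ n : ℤ, infDist (hIter f n x) (hIter f n '' C)

/-- `X` is semi-locally connected at `p`: every open neighborhood `U` of `p` contains an
open neighborhood `V` of `p` such that `X \ U` is covered by finitely many connected
components of `X \ V`. -/
def SemiLocallyConnectedAt [TopologicalSpace X] (p : X) : Prop :=
  ∀ U : Set X, IsOpen U → p ∈ U → ∃ V : Set X, IsOpen V ∧ p ∈ V ∧ V ⊆ U ∧
    ∃ 𝒞 : Finset (Set X), (∀ C ∈ 𝒞, ∃ x ∈ Vᶜ, C = connectedComponentIn Vᶜ x) ∧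
      Uᶜ ⊆ ⋃ C ∈ 𝒞, C

/-- `x` is an almost automorphic point of `f`. -/
def AlmostAutomorphicPt [MetricSpace X] (f : X ≃ₜ X) (x : X) : Prop :=
  ∀ (n : ℕ → ℤ) (y : X), Tendsto (fun i => hIter f (n i) x) atTop (𝓝 y) →
    Tendsto (fun i => hIter f (-(n i)) y) atTop (𝓝 x)

/-- A set `F ⊆ ℤ` is syndetic if it meets every interval `[n, n + l]` for some fixed `l > 0`. -/
def SyndeticZ (F : Set ℤ) : Prop :=
  ∃ l > (0 : ℤ), ∀ n : ℤ, ∃ m ∈ F, n ≤ m ∧ m ≤ n + l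

/-- `x` is an almost periodic point of `f`. -/
def AlmostPeriodicPt [TopologicalSpace X] (f : X ≃ₜ X) (x : X) : Prop :=
  ∀ U ∈ 𝓝 x, ∃ F : Set ℤ, SyndeticZ F ∧ ∀ n ∈ F, hIter f n x ∈ U

/-- `x` is a locally almost periodic point of `f`. -/
def LocallyAlmostPeriodicPt [TopologicalSpace X] (f : X ≃ₜ X) (x : X) : Prop :=
  ∀ U ∈ 𝓝 x, ∃ V ∈ 𝓝 x, V ⊆ U ∧ ∃ F : Set ℤ, SyndeticZ F ∧ ∀ n ∈ F, hIter f n '' V ⊆ U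

/-- `f` is distal. -/
def DistalHomeo [MetricSpace X] (f : X ≃ₜ X) : Prop :=
  ∀ x y : X, x ≠ y → 0 < ⨅ n : ℤ, dist (hIter f n x) (hIter f n y)

/-- `f` is transitive: some orbit `{fⁿ x : n ∈ ℤ}` is dense. -/
def TransitiveHomeo [TopologicalSpace X] (f : X ≃ₜ X) : Prop :=
  ∃ x : X, Dense (Set.range fun n : ℤ => hIter f n x)

theorem hIter_add [TopologicalSpace X] (f : X ≃ₜ X) (m n : ℤ) (x : X) :
    hIter f m (hIter f n x) = hIter f (m + n) x := by
  simp only [hIter, ← Equiv.Perm.mul_apply, ← zpow_add]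

theorem hIter_neg_cancel [TopologicalSpace X] (f : X ≃ₜ X) (n : ℤ) (x : X) :
    hIter f (-n) (hIter f n x) = x := by
  rw [hIter_add, neg_add_cancel]
  simp [hIter]

theorem hIter_cancel_neg [TopologicalSpace X] (f : X ≃ₜ X) (n : ℤ) (x : X) :
    hIter f n (hIter f (-n) x) = x := by
  rw [hIter_add, add_neg_cancel]
  simp [hIter]

/-- From semi-local connectedness: a sequence staying `r`-away from `q` frequently visits a
single subcontinuum avoiding `q`. -/
theorem getCont [MetricSpace X] [CompactSpace X]
    (hslc : ∀ p : X, SemiLocallyConnectedAt p) (q : X) (r : ℝ) (hr : 0 < r)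
    (z : ℕ → X) (hz : ∀ᶠ i in atTop, r ≤ dist (z i) q) :
    ∃ C : Set X, C.Nonempty ∧ IsCompact C ∧ IsConnected C ∧ q ∉ C ∧
      ∃ᶠ i in atTop, z i ∈ C := by
  obtain ⟨V, hVo, hqV, hVU, 𝒞, hcomp, hcover⟩ :=
    hslc q (ball q r) isOpen_ball (mem_ball_self hr)
  have hzU : ∀ᶠ i in atTop, z i ∈ ⋃ C ∈ 𝒞, C :=
    hz.mono fun i hi => hcover (by simp [mem_ball, not_lt, hi])
  have hC : ∃ C ∈ 𝒞, ∃ᶠ i in atTop, z i ∈ C := by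
    by_contra h
    push_neg at h
    have h' : ∀ᶠ i in atTop, ∀ C ∈ 𝒞, z i ∉ C :=
      (eventually_all_finset 𝒞).mpr fun C hCm => (h C hCm)
    obtain ⟨i, hiU, hiN⟩ := (hzU.and h').exists
    simp only [mem_iUnion, exists_prop] at hiU
    obtain ⟨C, hCm, hiC⟩ := hiU
    exact hiN C hCm hiC
  obtain ⟨C, hCm, hfreq⟩ := hC
  obtain ⟨x₀, hx₀, rfl⟩ := hcomp C hCm
  have hVc : IsClosed (Vᶜ : Set X) := hVo.isClosed_compl
  have hcompact : IsCompact (connectedComponentIn (Vᶜ) x₀) := by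
    rw [connectedComponentIn_eq_image hx₀]
    have : CompactSpace (Vᶜ : Set X) := isCompact_iff_compactSpace.mp hVc.isCompact
    exact (isClosed_connectedComponent.isCompact).image continuous_subtype_val
  exact ⟨_, ⟨x₀, mem_connectedComponentIn hx₀⟩, hcompact,
    isConnected_connectedComponentIn_iff.mpr hx₀,
    fun hq => (connectedComponentIn_subset _ _ hq) hqV, hfreq⟩

theorem bdd_aux [MetricSpace X] (f : X ≃ₜ X) (x : X) (C : Set X) :
    BddBelow (Set.range fun n : ℤ => infDist (hIter f n x) (hIter f n '' C)) := by
  refine ⟨0, ?_⟩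
  rintro _ ⟨n, rfl⟩
  exact infDist_nonneg

/-- Key lemma: under (CW) and semi-local connectedness, if `f^{m i} x → y` then
`f^{-(m i)} y` comes back near `x` frequently. -/
theorem aa_freq [MetricSpace X] [CompactSpace X] (f : X ≃ₜ X) (hCW : PropCW f)
    (hslc : ∀ p : X, SemiLocallyConnectedAt p) (x y : X) (m : ℕ → ℤ)
    (hconv : Tendsto (fun i => hIter f (m i) x) atTop (𝓝 y))
    (θ : ℝ) (hθ : 0 < θ) :
    ∃ᶠ i in atTop, dist (hIter f (-(m i)) y) x < θ := by
  by_contra h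
  rw [Filter.not_frequently] at h
  obtain ⟨C, hne, hcomp, hconn, hxC, hfreq⟩ := getCont hslc x θ hθ
    (fun i => hIter f (-(m i)) y) (h.mono fun i hi => not_lt.mp hi)
  have hc := hCW x C hne hcomp hconn hxC
  have hev : ∀ᶠ i in atTop, dist (hIter f (m i) x) y <
      ⨅ n : ℤ, infDist (hIter f n x) (hIter f n '' C) := by
    have := hconv (Metric.ball_mem_nhds y hc)
    simpa [mem_ball] using this
  obtain ⟨i, hiC, hilt⟩ := (hfreq.and_eventually hev).exists
  have hyim : y ∈ hIter f (m i) '' C := ⟨_, hiC, hIter_cancel_neg f (m i) y⟩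
  have h1 : (⨅ n : ℤ, infDist (hIter f n x) (hIter f n '' C)) ≤
      infDist (hIter f (m i) x) (hIter f (m i) '' C) := ciInf_le (bdd_aux f x C) (m i)
  have h2 : infDist (hIter f (m i) x) (hIter f (m i) '' C) ≤ dist (hIter f (m i) x) y :=
    infDist_le_dist_of_mem hyim
  linarith

/-- Main auxiliary lemma: no sequence `w i → p` can have its orbit-iterates stay
uniformly far from those of `p`. -/
theorem aux_main [MetricSpace X] [CompactSpace X] (f : X ≃ₜ X) (hCW : PropCW f)
    (hslc : ∀ p : X, SemiLocallyConnectedAt p) (ε : ℝ) (hε : 0 < ε) (p : X)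
    (w : ℕ → X) (m : ℕ → ℤ) (hw : Tendsto w atTop (𝓝 p))
    (hfar : ∀ i, ε ≤ dist (hIter f (m i) (w i)) (hIter f (m i) p)) : False := by
  obtain ⟨a, -, ψ, hψ, ha⟩ := isCompact_univ.tendsto_subseq
    (x := fun i => hIter f (m i) p) (fun i => mem_univ _)
  set M : ℕ → ℤ := fun i => m (ψ i) with hM
  set W : ℕ → X := fun i => w (ψ i) with hW
  have hWp : Tendsto W atTop (𝓝 p) := hw.comp hψ.tendsto_atTop
  have haM : Tendsto (fun i => hIter f (M i) p) atTop (𝓝 a) := ha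
  have hzfar : ∀ᶠ i in atTop, ε / 2 ≤ dist (hIter f (M i) (W i)) a := by
    have h1 : ∀ᶠ i in atTop, dist (hIter f (M i) p) a < ε / 2 := by
      have := haM (Metric.ball_mem_nhds a (show (0:ℝ) < ε/2 by linarith))
      simpa [mem_ball] using this
    refine h1.mono fun i hi => ?_
    have h2 := hfar (ψ i)
    have tri := dist_triangle (hIter f (M i) (W i)) a (hIter f (M i) p)
    have hcm : dist a (hIter f (M i) p) = dist (hIter f (M i) p) a := dist_comm _ _
    simp only [hM, hW] at *
    linarith
  obtain ⟨C, hne, hcomp, hconn, haC, hfreq⟩ := getCont hslc a (ε / 2) (by linarith)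
    (fun i => hIter f (M i) (W i)) hzfar
  have hc := hCW a C hne hcomp hconn haC
  set c := ⨅ n : ℤ, infDist (hIter f n a) (hIter f n '' C) with hcdef
  obtain ⟨φ, hφ, hφC⟩ := Filter.extraction_of_frequently_atTop hfreq
  have hlow : ∀ j, c ≤ dist (hIter f (-(M (φ j))) a) (W (φ j)) := by
    intro j
    have h1 : c ≤ infDist (hIter f (-(M (φ j))) a) (hIter f (-(M (φ j))) '' C) :=
      ciInf_le (bdd_aux f a C) (-(M (φ j)))
    have h2 : infDist (hIter f (-(M (φ j))) a) (hIter f (-(M (φ j))) '' C) ≤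
        dist (hIter f (-(M (φ j))) a) (W (φ j)) :=
      infDist_le_dist_of_mem ⟨_, hφC j, hIter_neg_cancel f (M (φ j)) (W (φ j))⟩
    linarith
  have hevfar : ∀ᶠ j in atTop, ¬ dist (hIter f (-(M (φ j))) a) p < c / 2 := by
    have hWφ : Tendsto (fun j => W (φ j)) atTop (𝓝 p) := hWp.comp hφ.tendsto_atTop
    have h1 : ∀ᶠ j in atTop, dist (W (φ j)) p < c / 2 := by
      have := hWφ (Metric.ball_mem_nhds p (show (0:ℝ) < c/2 by linarith))
      simpa [mem_ball] using this
    refine h1.mono fun j hj => ?_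
    have h2 := hlow j
    have tri := dist_triangle (hIter f (-(M (φ j))) a) p (W (φ j))
    have hcm : dist p (W (φ j)) = dist (W (φ j)) p := dist_comm _ _
    intro hlt
    linarith
  have hfr := aa_freq f hCW hslc p a (fun j => M (φ j))
    (haM.comp hφ.tendsto_atTop) (c / 2) (by linarith)
  obtain ⟨j, h1, h2⟩ := (hfr.and_eventually hevfar).exists
  exact h2 h1

/-- For a homeomorphism of a semi-locally connected compact metric space,
equicontinuity is equivalent to property (CW). -/
theorem equicont_iff_propCW_of_semiLocallyConnected
    [MetricSpace X] [CompactSpace X] (f : X ≃ₜ X)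
    (hslc : ∀ p : X, SemiLocallyConnectedAt p) :
    EquicontHomeo f ↔ PropCW f := by
  constructor
  · -- equicontinuous ⇒ (CW)
    intro he x C hne hcomp hconn hxC
    have hd0 : 0 < infDist x C := (hcomp.isClosed.notMem_iff_infDist_pos hne).mp hxC
    obtain ⟨δ, hδ, H⟩ := he (infDist x C / 2) (by linarith)
    refine lt_of_lt_of_le hδ (le_ciInf fun n => ?_)
    refine le_of_not_gt fun hlt => ?_
    obtain ⟨y, ⟨cpt, hcpt, rfl⟩, hy⟩ := (infDist_lt_iff (hne.image _)).mp hlt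
    have := H (hIter f n x) (hIter f n cpt) hy.le (-n)
    rw [hIter_neg_cancel, hIter_neg_cancel] at this
    have hle := infDist_le_dist_of_mem (x := x) hcpt
    linarith
  · -- (CW) ⇒ equicontinuous
    intro hCW
    by_contra hne
    unfold EquicontHomeo at hne
    push_neg at hne
    obtain ⟨ε, hε, hd⟩ := hne
    choose u v huv n hn using fun i : ℕ => hd (1 / ((i : ℝ) + 1)) (by positivity)
    obtain ⟨p, -, φ₁, hφ₁, hup⟩ := isCompact_univ.tendsto_subseq (x := u) (fun i => mem_univ _)
    have huv0 : Tendsto (fun i => dist (u i) (v i)) atTop (𝓝 0) :=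
      squeeze_zero (fun _ => dist_nonneg) huv tendsto_one_div_add_atTop_nhds_zero_nat
    have hupd : Tendsto (fun j => dist (u (φ₁ j)) p) atTop (𝓝 0) :=
      (tendsto_iff_dist_tendsto_zero.mp hup)
    have hvp : Tendsto (fun j => v (φ₁ j)) atTop (𝓝 p) := by
      rw [tendsto_iff_dist_tendsto_zero]
      have hbd : ∀ j, dist (v (φ₁ j)) p ≤ dist (u (φ₁ j)) (v (φ₁ j)) + dist (u (φ₁ j)) p := by
        intro j
        have := dist_triangle (v (φ₁ j)) (u (φ₁ j)) p
        have := dist_comm (v (φ₁ j)) (u (φ₁ j))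
        linarith [dist_triangle (v (φ₁ j)) (u (φ₁ j)) p]
      have hsum : Tendsto (fun j => dist (u (φ₁ j)) (v (φ₁ j)) + dist (u (φ₁ j)) p)
          atTop (𝓝 0) := by
        have := (huv0.comp hφ₁.tendsto_atTop).add hupd
        simpa using this
      exact squeeze_zero (fun _ => dist_nonneg) hbd hsum
    have hPQ : ∀ j, ε / 2 ≤ dist (hIter f (n (φ₁ j)) (u (φ₁ j))) (hIter f (n (φ₁ j)) p)
        ∨ ε / 2 ≤ dist (hIter f (n (φ₁ j)) (v (φ₁ j))) (hIter f (n (φ₁ j)) p) := by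
      intro j
      by_contra hcon
      push_neg at hcon
      obtain ⟨h1, h2⟩ := hcon
      have h3 := hn (φ₁ j)
      have tri := dist_triangle (hIter f (n (φ₁ j)) (u (φ₁ j))) (hIter f (n (φ₁ j)) p)
        (hIter f (n (φ₁ j)) (v (φ₁ j)))
      have hcm := dist_comm (hIter f (n (φ₁ j)) (v (φ₁ j))) (hIter f (n (φ₁ j)) p)
      linarith
    have hfr := Filter.frequently_atTop.mpr fun N => ⟨N, le_refl N, hPQ N⟩
    rcases Filter.frequently_or_distrib.mp hfr with h | h
    · obtain ⟨φ₂, hφ₂, hP⟩ := Filter.extraction_of_frequently_atTop h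
      exact aux_main f hCW hslc (ε / 2) (by linarith) p
        (fun j => u (φ₁ (φ₂ j))) (fun j => n (φ₁ (φ₂ j)))
        (hup.comp hφ₂.tendsto_atTop) hP
    · obtain ⟨φ₂, hφ₂, hP⟩ := Filter.extraction_of_frequently_atTop h
      exact aux_main f hCW hslc (ε / 2) (by linarith) p
        (fun j => v (φ₁ (φ₂ j))) (fun j => n (φ₁ (φ₂ j)))
        (hvp.comp hφ₂.tendsto_atTop) hP
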